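/- Let p be a prime, and let Q and Q' be quadratic averages on 𝔽_p^n with bases (V,q) and (V',q') respectively. Suppose that the rank of q − q', considered as a quadratic form on V ∩ V', is r. Then |⟨Q,Q'⟩| ≤ p^{−r/2}, where ⟨Q,Q'⟩ = 𝔼_x Q(x)·conj(Q'(x)). -/

import Mathlib

open scoped BigOperators

instance instNeZeroOfFactPrime (p : ℕ) [hp : Fact p.Prime] : NeZero p :=
  ⟨hp.out.ne_zero⟩

/-- The vector space `𝔽_p^n`. -/
abbrev Vec (p n : ℕ) := Fin n → ZMod p

/-- `ω^t` where `ω = e^{2πi/p}`. -/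
noncomputable def omg (p : ℕ) (t : ZMod p) : ℂ :=
  Complex.exp (2 * Real.pi * Complex.I * (t.val : ℂ) / p)

/-- Average of a complex-valued function over a finite type. -/
noncomputable def avgC {α : Type*} [Fintype α] (f : α → ℂ) : ℂ :=
  (∑ x, f x) / (Fintype.card α : ℂ)

/-- Average of a real-valued function over a finite type. -/
noncomputable def avgR {α : Type*} [Fintype α] (f : α → ℝ) : ℝ :=
  (∑ x, f x) / (Fintype.card α : ℝ)

/-- The Gowers `U²` norm. -/
noncomputable def U2 {p n : ℕ} [NeZero p] (f : Vec p n → ℂ) : ℝ :=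
  ‖avgC (fun t : Vec p n × Vec p n × Vec p n =>
    f t.1 * star (f (t.1 + t.2.1)) * star (f (t.1 + t.2.2)) *
      f (t.1 + t.2.1 + t.2.2))‖ ^ ((1 : ℝ) / 4)

/-- The Gowers `U³` norm. -/
noncomputable def U3 {p n : ℕ} [NeZero p] (f : Vec p n → ℂ) : ℝ :=
  ‖avgC (fun t : Vec p n × Vec p n × Vec p n × Vec p n =>
    f t.1 * star (f (t.1 + t.2.1)) * star (f (t.1 + t.2.2.1)) *
      f (t.1 + t.2.1 + t.2.2.1) * star (f (t.1 + t.2.2.2)) *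
      f (t.1 + t.2.1 + t.2.2.2) * f (t.1 + t.2.2.1 + t.2.2.2) *
      star (f (t.1 + t.2.1 + t.2.2.1 + t.2.2.2)))‖ ^ ((1 : ℝ) / 8)

/-- `L¹` norm (with respect to the uniform probability measure). -/
noncomputable def L1 {p n : ℕ} [NeZero p] (f : Vec p n → ℂ) : ℝ :=
  avgR (fun x => ‖f x‖)

/-- `L²` norm (with respect to the uniform probability measure). -/
noncomputable def L2 {p n : ℕ} [NeZero p] (f : Vec p n → ℂ) : ℝ :=
  Real.sqrt (avgR (fun x => ‖f x‖ ^ 2))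

/-- `L∞` norm. -/
noncomputable def Linf {p n : ℕ} [NeZero p] (f : Vec p n → ℂ) : ℝ :=
  ⨆ x, ‖f x‖

/-- Normalized inner product `⟨f,g⟩ = 𝔼_x f(x) conj (g x)`. -/
noncomputable def inprod {p n : ℕ} [NeZero p] (f g : Vec p n → ℂ) : ℂ :=
  avgC (fun x => f x * star (g x))

/-- The dual of the `U²` norm. -/
noncomputable def U2dual {p n : ℕ} [NeZero p] (g : Vec p n → ℂ) : ℝ :=
  sSup {r : ℝ | ∃ f : Vec p n → ℂ, U2 f ≤ 1 ∧ r = ‖inprod f g‖}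

/-- The elements of a submodule of `𝔽_p^n` as a `Finset`. -/
noncomputable def subFinset {p n : ℕ} [NeZero p] (V : Submodule (ZMod p) (Vec p n)) :
    Finset (Vec p n) :=
  letI := Classical.decPred (fun v => v ∈ (V : Set (Vec p n)))
  Finset.univ.filter (fun v => v ∈ (V : Set (Vec p n)))

/-- Convolution `f * μ_V`, i.e. the average of `f` over the coset `x + V`. -/
noncomputable def convMu {p n : ℕ} [NeZero p] (f : Vec p n → ℂ)
    (V : Submodule (ZMod p) (Vec p n)) (x : Vec p n) : ℂ :=
  (∑ v ∈ subFinset V, f (x + v)) / ((subFinset V).card : ℂ)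

/-- The associated symmetric form `β(u,v) = q(u+v) - q(u) - q(v)`. -/
def qbeta {p n : ℕ} (q : Vec p n → ZMod p) (u v : Vec p n) : ZMod p :=
  q (u + v) - q u - q v

/-- `q` is a quadratic form on the subspace `V`: `q 0 = 0` and the associated
form `β` is (bi-)additive on `V`. -/
def IsQuadFormOn {p n : ℕ} (V : Submodule (ZMod p) (Vec p n))
    (q : Vec p n → ZMod p) : Prop :=
  q 0 = 0 ∧ ∀ u ∈ V, ∀ v ∈ V, ∀ w ∈ V, qbeta q u (v + w) = qbeta q u v + qbeta q u w

/-- The radical `{v ∈ V : β(u,v) = 0 for all u ∈ V}` of the form associated to `q`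
(as the span of that set, which equals the set itself when `q` is quadratic). -/
noncomputable def qRadical {p n : ℕ} (V : Submodule (ZMod p) (Vec p n))
    (q : Vec p n → ZMod p) : Submodule (ZMod p) (Vec p n) :=
  Submodule.span (ZMod p) {v | v ∈ V ∧ ∀ u ∈ V, qbeta q u v = 0}

/-- The rank of the quadratic form `q` on `V`: the codimension in `V` of the radical. -/
noncomputable def qRank {p n : ℕ} (V : Submodule (ZMod p) (Vec p n))
    (q : Vec p n → ZMod p) : ℕ :=
  Module.finrank (ZMod p) V - Module.finrank (ZMod p) (qRadical V q)

/-- `Q` is a quadratic average with base `(V, q)`: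
`Q(x) = 𝔼_{y ∈ x+V} ω^{q(x-y) + φ_y(x-y)}` with each `φ_y` linear on `V`.
(Parametrizing `y = x - v` with `v ∈ V`, this reads `Q(x) = 𝔼_{v ∈ V} ω^{q(v) + φ_{x-v}(v)}`.) -/
def IsQuadAvgWith {p n : ℕ} [NeZero p] (V : Submodule (ZMod p) (Vec p n))
    (q : Vec p n → ZMod p) (Q : Vec p n → ℂ) : Prop :=
  IsQuadFormOn V q ∧
  ∃ φ : Vec p n → Vec p n → ZMod p,
    (∀ y, ∀ u ∈ V, ∀ v ∈ V, φ y (u + v) = φ y u + φ y v) ∧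
    ∀ x, Q x = (∑ v ∈ subFinset V, omg p (q v + φ (x - v) v)) / ((subFinset V).card : ℂ)

/-- The radical of a bilinear form `β` restricted to the subspace `W`. -/
noncomputable def bRadical {p n : ℕ} (W : Submodule (ZMod p) (Vec p n))
    (β : Vec p n →ₗ[ZMod p] Vec p n →ₗ[ZMod p] ZMod p) :
    Submodule (ZMod p) (Vec p n) :=
  Submodule.span (ZMod p) {y | y ∈ W ∧ ∀ x ∈ W, β x y = 0}

/-- The rank of the bilinear form `β` restricted to the subspace `W`. -/
noncomputable def bRankOn {p n : ℕ} (W : Submodule (ZMod p) (Vec p n))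
    (β : Vec p n →ₗ[ZMod p] Vec p n →ₗ[ZMod p] ZMod p) : ℕ :=
  Module.finrank (ZMod p) W - Module.finrank (ZMod p) (bRadical W β)


/-! ### Auxiliary lemmas -/

noncomputable def eN (p m : ℕ) : ℂ := Complex.exp (2 * Real.pi * Complex.I * m / p)

lemma eN_add (p a b : ℕ) : eN p (a + b) = eN p a * eN p b := by
  rw [eN, eN, eN, ← Complex.exp_add]; congr 1; push_cast; ring

lemma eN_mul_p (p k : ℕ) [NeZero p] : eN p (p * k) = 1 := by
  rw [eN]
  have hp : (p : ℂ) ≠ 0 := Nat.cast_ne_zero.2 (NeZero.ne p)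
  have : 2 * Real.pi * Complex.I * (↑(p * k)) / p = (k : ℤ) * (2 * Real.pi * Complex.I) := by
    push_cast; field_simp
  rw [this, Complex.exp_int_mul_two_pi_mul_I]

lemma eN_mod (p m : ℕ) [NeZero p] : eN p (m % p) = eN p m := by
  conv_rhs => rw [← Nat.div_add_mod m p]
  rw [eN_add, eN_mul_p, one_mul]

lemma omg_eq_eN (p : ℕ) (t : ZMod p) : omg p t = eN p t.val := rfl

lemma omg_natCast (p m : ℕ) [NeZero p] : omg p (m : ZMod p) = eN p m := by
  rw [omg_eq_eN, ZMod.val_natCast, eN_mod]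

lemma omg_add (p : ℕ) [NeZero p] (s t : ZMod p) : omg p (s + t) = omg p s * omg p t := by
  have h : ((s.val + t.val : ℕ) : ZMod p) = s + t := by
    push_cast [ZMod.natCast_val]; simp [ZMod.cast_id]
  rw [← h, omg_natCast, eN_add, omg_eq_eN, omg_eq_eN]

lemma omg_zero (p : ℕ) [NeZero p] : omg p 0 = 1 := by simp [omg]

lemma omg_norm (p : ℕ) (t : ZMod p) : ‖omg p t‖ = 1 := by
  rw [omg]
  have : 2 * Real.pi * Complex.I * (t.val : ℂ) / p
      = ((2 * Real.pi * t.val / p : ℝ) : ℂ) * Complex.I := by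
    push_cast; ring
  rw [this]
  exact Complex.norm_exp_ofReal_mul_I _

lemma omg_star (p : ℕ) [NeZero p] (t : ZMod p) : star (omg p t) = omg p (-t) := by
  have h1 : omg p t * omg p (-t) = 1 := by rw [← omg_add]; simp [omg_zero]
  have h2 : star (omg p t) * omg p t = 1 := by
    rw [mul_comm, Complex.star_def, Complex.mul_conj, Complex.normSq_eq_norm_sq,
      omg_norm]
    norm_num
  calc star (omg p t) = star (omg p t) * (omg p t * omg p (-t)) := by rw [h1, mul_one]
    _ = (star (omg p t) * omg p t) * omg p (-t) := by ring
    _ = omg p (-t) := by rw [h2, one_mul]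

lemma omg_ne_one (p : ℕ) [Fact p.Prime] {t : ZMod p} (ht : t ≠ 0) : omg p t ≠ 1 := by
  rw [omg]
  intro h
  rw [Complex.exp_eq_one_iff] at h
  obtain ⟨k, hk⟩ := h
  have hp : (p : ℂ) ≠ 0 := Nat.cast_ne_zero.2 (NeZero.ne p)
  have h2 : (2 * (Real.pi:ℂ) * Complex.I) ≠ 0 := by
    simp [Real.pi_ne_zero, Complex.I_ne_zero]
  have hval : (t.val : ℂ) = k * p := by
    have hk' := congrArg (fun z => z * (p:ℂ)) hk
    simp only [div_mul_cancel₀ _ hp] at hk'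
    have : (t.val : ℂ) * (2 * Real.pi * Complex.I) = (k * p) * (2 * Real.pi * Complex.I) := by
      linear_combination hk'
    exact mul_right_cancel₀ h2 this
  have hvalZ : (t.val : ℤ) = k * p := by exact_mod_cast hval
  have hdvd : (p : ℕ) ∣ t.val := by
    have : (p:ℤ) ∣ (t.val : ℤ) := ⟨k, by rw [hvalZ]; ring⟩
    exact_mod_cast this
  have hlt : t.val < p := ZMod.val_lt t
  have : t.val = 0 := Nat.eq_zero_of_dvd_of_lt hdvd hlt
  exact ht (by rwa [← ZMod.val_eq_zero])

section AuxLemmas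

variable {p n : ℕ} [Fact p.Prime]

lemma mem_subFinset {V : Submodule (ZMod p) (Vec p n)} {v : Vec p n} :
    v ∈ subFinset V ↔ v ∈ V := by
  classical
  simp [subFinset]

lemma card_subFinset (V : Submodule (ZMod p) (Vec p n)) :
    (subFinset V).card = p ^ Module.finrank (ZMod p) V := by
  classical
  have h1 : (subFinset V).card = Fintype.card V := by
    simp only [subFinset]
    rw [Finset.filter_congr_decidable]
    exact (Fintype.card_subtype _).symm
  have h2 : Fintype.card V = Fintype.card (ZMod p) ^ Module.finrank (ZMod p) V :=
    Module.card_eq_pow_finrank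
  rw [h1, h2, ZMod.card]

lemma sum_subFinset_shift {M : Type*} [AddCommMonoid M] {W : Submodule (ZMod p) (Vec p n)}
    {w₀ : Vec p n} (hw₀ : w₀ ∈ W) (f : Vec p n → M) :
    ∑ w ∈ subFinset W, f (w + w₀) = ∑ w ∈ subFinset W, f w := by
  apply Finset.sum_nbij' (i := fun w => w + w₀) (j := fun w => w - w₀) <;>
    simp_all [mem_subFinset] <;> intro a ha <;>
    [exact W.add_mem ha hw₀; exact W.sub_mem ha hw₀]

lemma char_sum_eq_zero {W : Submodule (ZMod p) (Vec p n)} {χ : Vec p n → ZMod p}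
    (hadd : ∀ u ∈ W, ∀ v ∈ W, χ (u + v) = χ u + χ v)
    {w₀ : Vec p n} (hw₀ : w₀ ∈ W) (hχ : χ w₀ ≠ 0) :
    ∑ w ∈ subFinset W, omg p (χ w) = 0 := by
  have key : omg p (χ w₀) * ∑ w ∈ subFinset W, omg p (χ w) = ∑ w ∈ subFinset W, omg p (χ w) := by
    rw [Finset.mul_sum]
    calc ∑ w ∈ subFinset W, omg p (χ w₀) * omg p (χ w)
        = ∑ w ∈ subFinset W, omg p (χ (w + w₀)) := by
          apply Finset.sum_congr rfl
          intro w hw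
          rw [hadd w (mem_subFinset.1 hw) w₀ hw₀, omg_add, mul_comm]
      _ = ∑ w ∈ subFinset W, omg p (χ w) := sum_subFinset_shift hw₀ (fun w => omg p (χ w))
  have h2 : (omg p (χ w₀) - 1) * ∑ w ∈ subFinset W, omg p (χ w) = 0 := by
    rw [sub_mul, key, one_mul, sub_self]
  rcases mul_eq_zero.1 h2 with h | h
  · exact absurd (sub_eq_zero.1 h) (omg_ne_one p hχ)
  · exact h

/-- The radical as an `AddSubgroup`. -/
def radGrp (W : Submodule (ZMod p) (Vec p n)) (Q : Vec p n → ZMod p)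
    (hq : IsQuadFormOn W Q) : AddSubgroup (Vec p n) where
  carrier := {h | h ∈ W ∧ ∀ u ∈ W, qbeta Q u h = 0}
  zero_mem' := ⟨W.zero_mem, fun u _ => by simp [qbeta, hq.1]⟩
  add_mem' := by
    rintro a b ⟨haW, ha⟩ ⟨hbW, hb⟩
    refine ⟨W.add_mem haW hbW, fun u hu => ?_⟩
    rw [hq.2 u hu a haW b hbW, ha u hu, hb u hu, add_zero]
  neg_mem' := by
    rintro a ⟨haW, ha⟩
    refine ⟨W.neg_mem haW, fun u hu => ?_⟩
    have h0 : qbeta Q u (a + -a) = qbeta Q u a + qbeta Q u (-a) :=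
      hq.2 u hu a haW (-a) (W.neg_mem haW)
    simp only [add_neg_cancel] at h0
    have : qbeta Q u 0 = 0 := by simp [qbeta, hq.1]
    rw [this, ha u hu] at h0
    simpa using h0.symm

lemma qRadical_eq (W : Submodule (ZMod p) (Vec p n)) (Q : Vec p n → ZMod p)
    (hq : IsQuadFormOn W Q) :
    qRadical W Q = AddSubgroup.toZModSubmodule p (radGrp W Q hq) := by
  rw [qRadical]
  have : {v | v ∈ W ∧ ∀ u ∈ W, qbeta Q u v = 0} =
      ((AddSubgroup.toZModSubmodule p (radGrp W Q hq) : Submodule (ZMod p) (Vec p n)) :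
        Set (Vec p n)) := rfl
  rw [this, Submodule.span_eq]

lemma qRadical_le (W : Submodule (ZMod p) (Vec p n)) (Q : Vec p n → ZMod p)
    (hq : IsQuadFormOn W Q) : qRadical W Q ≤ W := by
  rw [qRadical_eq W Q hq]
  intro x hx
  exact hx.1

lemma card_radFilter (W : Submodule (ZMod p) (Vec p n)) (Q : Vec p n → ZMod p)
    (hq : IsQuadFormOn W Q)
    [DecidablePred (fun h : Vec p n => ∀ u ∈ W, qbeta Q u h = 0)] :
    ((subFinset W).filter (fun h => ∀ u ∈ W, qbeta Q u h = 0)).card =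
      p ^ Module.finrank (ZMod p) (qRadical W Q) := by
  classical
  have : (subFinset W).filter (fun h => ∀ u ∈ W, qbeta Q u h = 0) =
      subFinset (qRadical W Q) := by
    ext h
    simp only [Finset.mem_filter, mem_subFinset, qRadical_eq W Q hq]
    constructor
    · rintro ⟨h1, h2⟩; exact ⟨h1, h2⟩
    · rintro ⟨h1, h2⟩; exact ⟨h1, h2⟩
  rw [this, card_subFinset]

lemma qbeta_comm (Q : Vec p n → ZMod p) (u v : Vec p n) : qbeta Q u v = qbeta Q v u := by
  unfold qbeta; rw [add_comm]; ring

lemma gauss_bound (W : Submodule (ZMod p) (Vec p n)) (Q : Vec p n → ZMod p)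
    (hq : IsQuadFormOn W Q) (L : Vec p n → ZMod p)
    (hL : ∀ u ∈ W, ∀ v ∈ W, L (u + v) = L u + L v) :
    ‖∑ w ∈ subFinset W, omg p (Q w + L w)‖ ≤
      ((subFinset W).card : ℝ) * (p : ℝ) ^ (-(qRank W Q : ℝ) / 2) := by
  classical
  set G := ∑ w ∈ subFinset W, omg p (Q w + L w) with hG
  set C : Vec p n → ℂ := fun h => ∑ w' ∈ subFinset W, omg p (qbeta Q w' h) with hC
  have stepB : G * star G = ∑ h ∈ subFinset W, omg p (Q h + L h) * C h := by
    rw [hG, star_sum, Finset.sum_mul_sum]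
    have inner : ∀ w' ∈ subFinset W,
        ∑ w ∈ subFinset W, omg p (Q w + L w) * star (omg p (Q w' + L w')) =
        ∑ h ∈ subFinset W, omg p (Q h + L h + qbeta Q w' h) := by
      intro w' hw'
      have hw'W := mem_subFinset.1 hw'
      calc ∑ w ∈ subFinset W, omg p (Q w + L w) * star (omg p (Q w' + L w'))
          = ∑ w ∈ subFinset W, omg p (Q w + L w - (Q w' + L w')) := by
            apply Finset.sum_congr rfl; intro w _
            rw [omg_star, ← omg_add, sub_eq_add_neg]
        _ = ∑ h ∈ subFinset W, omg p (Q (h + w') + L (h + w') - (Q w' + L w')) :=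
            (sum_subFinset_shift hw'W (fun w => omg p (Q w + L w - (Q w' + L w')))).symm
        _ = ∑ h ∈ subFinset W, omg p (Q h + L h + qbeta Q w' h) := by
            apply Finset.sum_congr rfl; intro h hh
            have hhW := mem_subFinset.1 hh
            congr 1
            have h1 : Q (h + w') = qbeta Q w' h + Q w' + Q h := by
              rw [add_comm h w']; simp [qbeta]; ring
            have h2 : L (h + w') = L h + L w' := hL h hhW w' hw'W
            rw [h1, h2]; ring
    calc ∑ w ∈ subFinset W, ∑ w' ∈ subFinset W,
            omg p (Q w + L w) * star (omg p (Q w' + L w'))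
        = ∑ w' ∈ subFinset W, ∑ w ∈ subFinset W,
            omg p (Q w + L w) * star (omg p (Q w' + L w')) := Finset.sum_comm
      _ = ∑ w' ∈ subFinset W, ∑ h ∈ subFinset W, omg p (Q h + L h + qbeta Q w' h) :=
          Finset.sum_congr rfl inner
      _ = ∑ h ∈ subFinset W, ∑ w' ∈ subFinset W, omg p (Q h + L h + qbeta Q w' h) :=
          Finset.sum_comm
      _ = ∑ h ∈ subFinset W, omg p (Q h + L h) * C h := by
          apply Finset.sum_congr rfl; intro h _
          rw [hC, Finset.mul_sum]
          exact Finset.sum_congr rfl (fun w' _ => omg_add p _ _)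
  have hCh : ∀ h ∈ subFinset W, ‖C h‖ ≤
      if (∀ u ∈ W, qbeta Q u h = 0) then ((subFinset W).card : ℝ) else 0 := by
    intro h hh
    have hhW := mem_subFinset.1 hh
    by_cases hP : ∀ u ∈ W, qbeta Q u h = 0
    · rw [if_pos hP, hC]
      calc ‖∑ w' ∈ subFinset W, omg p (qbeta Q w' h)‖
          ≤ ∑ w' ∈ subFinset W, ‖omg p (qbeta Q w' h)‖ := norm_sum_le _ _
        _ = ∑ w' ∈ subFinset W, (1:ℝ) := Finset.sum_congr rfl (fun w' _ => omg_norm p _)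
        _ = ((subFinset W).card : ℝ) := by simp
    · rw [if_neg hP]
      push_neg at hP
      obtain ⟨u, huW, hu⟩ := hP
      have : C h = 0 := by
        rw [hC]
        apply char_sum_eq_zero (χ := fun w' => qbeta Q w' h)
        · intro a ha b hb
          rw [qbeta_comm Q (a + b) h, hq.2 h hhW a ha b hb, qbeta_comm Q h a, qbeta_comm Q h b]
        · exact huW
        · exact hu
      rw [this, norm_zero]
  have stepC : ‖G‖ ^ 2 ≤ ((subFinset W).card : ℝ) *
      (p : ℝ) ^ (Module.finrank (ZMod p) (qRadical W Q)) := by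
    have h1 : ‖G‖ ^ 2 = ‖G * star G‖ := by
      rw [norm_mul, norm_star]; ring
    rw [h1, stepB]
    calc ‖∑ h ∈ subFinset W, omg p (Q h + L h) * C h‖
        ≤ ∑ h ∈ subFinset W, ‖omg p (Q h + L h) * C h‖ := norm_sum_le _ _
      _ = ∑ h ∈ subFinset W, ‖C h‖ := by
          apply Finset.sum_congr rfl; intro h _
          rw [norm_mul, omg_norm, one_mul]
      _ ≤ ∑ h ∈ subFinset W,
            (if (∀ u ∈ W, qbeta Q u h = 0) then ((subFinset W).card : ℝ) else 0) :=
          Finset.sum_le_sum hCh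
      _ = ((subFinset W).filter (fun h => ∀ u ∈ W, qbeta Q u h = 0)).card *
            ((subFinset W).card : ℝ) := by
          rw [Finset.sum_ite, Finset.sum_const_zero, add_zero, Finset.sum_const,
            nsmul_eq_mul]
      _ = ((subFinset W).card : ℝ) *
            (p : ℝ) ^ (Module.finrank (ZMod p) (qRadical W Q)) := by
          rw [card_radFilter W Q hq]
          push_cast
          ring
  -- final numeric step
  set a := Module.finrank (ZMod p) W with ha
  set b := Module.finrank (ZMod p) (qRadical W Q) with hb
  have hba : b ≤ a := Submodule.finrank_mono (qRadical_le W Q hq)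
  have hp0 : (0:ℝ) < p := by
    have := (Fact.out : p.Prime).pos
    exact_mod_cast this
  have hrk : qRank W Q = a - b := rfl
  set R : ℝ := ((subFinset W).card : ℝ) * (p : ℝ) ^ (-(qRank W Q : ℝ) / 2) with hR
  have hRsq : R ^ 2 = ((subFinset W).card : ℝ) * (p : ℝ) ^ b := by
    rw [hR, mul_pow]
    have h2 : ((p:ℝ) ^ (-(qRank W Q : ℝ)/2)) ^ 2 = (p:ℝ) ^ (-(qRank W Q : ℝ)) := by
      rw [← Real.rpow_natCast ((p:ℝ) ^ (-(qRank W Q : ℝ)/2)) 2, ← Real.rpow_mul hp0.le]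
      norm_num
    rw [h2, Real.rpow_neg hp0.le, Real.rpow_natCast, card_subFinset, hrk]
    field_simp
    rw [Nat.cast_pow, ← ha, ← pow_add]
    congr 1
    omega
  have hR0 : (0:ℝ) ≤ R := by
    rw [hR]; positivity
  calc ‖G‖ = Real.sqrt (‖G‖ ^ 2) := (Real.sqrt_sq (norm_nonneg _)).symm
    _ ≤ Real.sqrt (R ^ 2) := Real.sqrt_le_sqrt (by rw [hRsq]; exact stepC)
    _ = R := Real.sqrt_sq hR0

lemma filter_eq_subFinset (V : Submodule (ZMod p) (Vec p n))
    [DecidablePred (fun v : Vec p n => v ∈ V)] :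
    Finset.univ.filter (fun v : Vec p n => v ∈ V) = subFinset V := by
  ext v; simp [mem_subFinset]

lemma sum_subFinset_reindex {M : Type*} [AddCommMonoid M] (V : Submodule (ZMod p) (Vec p n))
    [DecidablePred (fun v : Vec p n => v ∈ V)]
    (x : Vec p n) (g : Vec p n → M) :
    ∑ v ∈ subFinset V, g v = ∑ y : Vec p n, if x - y ∈ V then g (x - y) else 0 := by
  rw [← filter_eq_subFinset, Finset.sum_filter]
  exact (Fintype.sum_equiv (Equiv.subLeft x)
    (fun y => if x - y ∈ V then g (x - y) else 0)
    (fun v => if v ∈ V then g v else 0) (fun _ => rfl)).symm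

end AuxLemmas

/-- Lemma 4.3. If `Q, Q'` are quadratic averages with bases `(V,q)`,
`(V',q')` and the rank of `q - q'` on `V ⊓ V'` is `r`, then `|⟨Q,Q'⟩| ≤ p^{-r/2}`. -/
theorem stmt7 (p : ℕ) [Fact p.Prime] (n : ℕ)
    (V V' : Submodule (ZMod p) (Vec p n))
    (q q' : Vec p n → ZMod p) (Q Q' : Vec p n → ℂ) (r : ℕ)
    (hQ : IsQuadAvgWith V q Q) (hQ' : IsQuadAvgWith V' q' Q')
    (hr : qRank (V ⊓ V') (fun x => q x - q' x) = r) :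
    ‖inprod Q Q'‖ ≤ (p : ℝ) ^ (-(r : ℝ) / 2) := by
  classical
  obtain ⟨hqV, φ, hφadd, hQeq⟩ := hQ
  obtain ⟨hq'V, φ', hφ'add, hQ'eq⟩ := hQ'
  set W : Submodule (ZMod p) (Vec p n) := V ⊓ V' with hW
  set Qt : Vec p n → ZMod p := fun x => q x - q' x with hQt
  have hqW : IsQuadFormOn W Qt := by
    constructor
    · simp [hQt, hqV.1, hq'V.1]
    · intro u hu v hv w hw
      obtain ⟨hu1, hu2⟩ := Submodule.mem_inf.1 hu
      obtain ⟨hv1, hv2⟩ := Submodule.mem_inf.1 hv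
      obtain ⟨hw1, hw2⟩ := Submodule.mem_inf.1 hw
      have h1 := hqV.2 u hu1 v hv1 w hw1
      have h2 := hq'V.2 u hu2 v hv2 w hw2
      simp only [qbeta, hQt] at h1 h2 ⊢
      linear_combination h1 - h2
  set B : ℝ := (p : ℝ) ^ (-(r : ℝ) / 2) with hB
  set N : ℕ := Fintype.card (Vec p n) with hN
  set cV : ℕ := (subFinset V).card with hcV
  set cV' : ℕ := (subFinset V').card with hcV'
  set cW : ℕ := (subFinset W).card with hcW
  -- the inner exponent
  set E : Vec p n → Vec p n → Vec p n → ZMod p :=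
    fun x y y' => q (x - y) + φ y (x - y) - (q' (x - y') + φ' y' (x - y')) with hE
  set A : Vec p n → Vec p n → Finset (Vec p n) :=
    fun y y' => Finset.univ.filter (fun x => x - y ∈ V ∧ x - y' ∈ V') with hA
  set S : Vec p n → Vec p n → ℂ := fun y y' => ∑ x ∈ A y y', omg p (E x y y') with hS
  set T : ℂ := ∑ x : Vec p n, ∑ v ∈ subFinset V, ∑ v' ∈ subFinset V',
    omg p (q v + φ (x - v) v - (q' v' + φ' (x - v') v')) with hT
  -- Step 1a: inprod = T / (cV * cV') / N
  have step1a : inprod Q Q' = T / (cV * cV') / N := by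
    rw [inprod, avgC, ← hN]
    congr 1
    rw [hT, Finset.sum_div]
    apply Finset.sum_congr rfl
    intro x _
    rw [hQeq x, hQ'eq x, star_div₀, star_sum, div_mul_div_comm, star_natCast]
    congr 1
    rw [Finset.sum_mul_sum]
    apply Finset.sum_congr rfl
    intro v _
    apply Finset.sum_congr rfl
    intro v' _
    rw [omg_star, ← omg_add]
    congr 1
    ring
  -- Step 1b: T = ∑_y ∑_y' S y y'
  have step1b : T = ∑ y : Vec p n, ∑ y' : Vec p n, S y y' := by
    rw [hT]
    have hx : ∀ x : Vec p n, ∑ v ∈ subFinset V, ∑ v' ∈ subFinset V',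
        omg p (q v + φ (x - v) v - (q' v' + φ' (x - v') v')) =
        ∑ y : Vec p n, ∑ y' : Vec p n,
          (if x - y ∈ V ∧ x - y' ∈ V' then omg p (E x y y') else 0) := by
      intro x
      rw [sum_subFinset_reindex V x]
      apply Finset.sum_congr rfl
      intro y _
      by_cases hy : x - y ∈ V
      · rw [if_pos hy]
        rw [sum_subFinset_reindex V' x]
        apply Finset.sum_congr rfl
        intro y' _
        by_cases hy' : x - y' ∈ V'
        · rw [if_pos hy', if_pos ⟨hy, hy'⟩, hE]
          simp [sub_sub_cancel]
        · rw [if_neg hy', if_neg (fun h => hy' h.2)]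
      · rw [if_neg hy]
        rw [eq_comm, Finset.sum_eq_zero]
        intro y' _
        rw [if_neg (fun h => hy h.1)]
    calc ∑ x : Vec p n, ∑ v ∈ subFinset V, ∑ v' ∈ subFinset V',
            omg p (q v + φ (x - v) v - (q' v' + φ' (x - v') v'))
        = ∑ x : Vec p n, ∑ y : Vec p n, ∑ y' : Vec p n,
            (if x - y ∈ V ∧ x - y' ∈ V' then omg p (E x y y') else 0) :=
          Finset.sum_congr rfl (fun x _ => hx x)
      _ = ∑ y : Vec p n, ∑ x : Vec p n, ∑ y' : Vec p n,
            (if x - y ∈ V ∧ x - y' ∈ V' then omg p (E x y y') else 0) := Finset.sum_comm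
      _ = ∑ y : Vec p n, ∑ y' : Vec p n, ∑ x : Vec p n,
            (if x - y ∈ V ∧ x - y' ∈ V' then omg p (E x y y') else 0) :=
          Finset.sum_congr rfl (fun y _ => Finset.sum_comm)
      _ = ∑ y : Vec p n, ∑ y' : Vec p n, S y y' := by
          apply Finset.sum_congr rfl; intro y _
          apply Finset.sum_congr rfl; intro y' _
          simp only [hS, hA]
          exact (Finset.sum_filter _ _).symm
  -- Step 2: per-pair bound
  have step2 : ∀ y y' : Vec p n, ‖S y y'‖ ≤ ((A y y').card : ℝ) * B := by
    intro y y'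
    rcases (A y y').eq_empty_or_nonempty with hemp | ⟨x₀, hx₀⟩
    · rw [hS]; simp only [hemp, Finset.sum_empty, norm_zero, Finset.card_empty]
      simp
    · have hx₀' : x₀ - y ∈ V ∧ x₀ - y' ∈ V' := by
        have := (Finset.mem_filter.1 hx₀).2
        exact this
      obtain ⟨hx₀V, hx₀V'⟩ := hx₀'
      -- reindex A over subFinset W
      have hre : ∀ {M : Type} [AddCommMonoid M] (f : Vec p n → M),
          ∑ x ∈ A y y', f x = ∑ w ∈ subFinset W, f (x₀ + w) := by
        intro M _ f
        apply Finset.sum_nbij' (i := fun x => x - x₀) (j := fun w => x₀ + w)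
        · intro x hx
          have hx2 := (Finset.mem_filter.1 hx).2
          rw [mem_subFinset, hW, Submodule.mem_inf]
          constructor
          · have : x - x₀ = (x - y) - (x₀ - y) := by abel
            rw [this]; exact V.sub_mem hx2.1 hx₀V
          · have : x - x₀ = (x - y') - (x₀ - y') := by abel
            rw [this]; exact V'.sub_mem hx2.2 hx₀V'
        · intro w hw
          obtain ⟨hw1, hw2⟩ := Submodule.mem_inf.1 (mem_subFinset.1 hw)
          rw [hA]
          refine Finset.mem_filter.2 ⟨Finset.mem_univ _, ?_, ?_⟩
          · have : x₀ + w - y = (x₀ - y) + w := by abel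
            rw [this]; exact V.add_mem hx₀V hw1
          · have : x₀ + w - y' = (x₀ - y') + w := by abel
            rw [this]; exact V'.add_mem hx₀V' hw2
        · intro x _; abel
        · intro w _; abel
        · intro x _; rw [add_sub_cancel]
      have hreN : ∀ f : Vec p n → ℕ, ∑ x ∈ A y y', f x = ∑ w ∈ subFinset W, f (x₀ + w) :=
        fun f => hre f
      have hcard : (A y y').card = cW := by
        rw [hcW, Finset.card_eq_sum_ones, Finset.card_eq_sum_ones]
        exact hreN (fun _ => 1)
      -- the linear part
      set L : Vec p n → ZMod p := fun w =>
        qbeta q (x₀ - y) w + φ y w - (qbeta q' (x₀ - y') w + φ' y' w) with hL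
      have hLadd : ∀ u ∈ W, ∀ v ∈ W, L (u + v) = L u + L v := by
        intro u hu v hv
        obtain ⟨hu1, hu2⟩ := Submodule.mem_inf.1 hu
        obtain ⟨hv1, hv2⟩ := Submodule.mem_inf.1 hv
        have h1 := hqV.2 (x₀ - y) hx₀V u hu1 v hv1
        have h2 := hq'V.2 (x₀ - y') hx₀V' u hu2 v hv2
        have h3 := hφadd y u hu1 v hv1
        have h4 := hφ'add y' u hu2 v hv2
        rw [hL]
        simp only
        linear_combination h1 - h2 + h3 - h4
      have hEexp : ∀ w ∈ subFinset W, E (x₀ + w) y y' = E x₀ y y' + (Qt w + L w) := by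
        intro w hw
        obtain ⟨hw1, hw2⟩ := Submodule.mem_inf.1 (mem_subFinset.1 hw)
        have e1 : x₀ + w - y = (x₀ - y) + w := by abel
        have e2 : x₀ + w - y' = (x₀ - y') + w := by abel
        have hq1 : q ((x₀ - y) + w) = q (x₀ - y) + q w + qbeta q (x₀ - y) w := by
          simp only [qbeta]; ring
        have hq2 : q' ((x₀ - y') + w) = q' (x₀ - y') + q' w + qbeta q' (x₀ - y') w := by
          simp only [qbeta]; ring
        have hp1 : φ y ((x₀ - y) + w) = φ y (x₀ - y) + φ y w := hφadd y (x₀ - y) hx₀V w hw1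
        have hp2 : φ' y' ((x₀ - y') + w) = φ' y' (x₀ - y') + φ' y' w :=
          hφ'add y' (x₀ - y') hx₀V' w hw2
        rw [hE]
        simp only [e1, e2, hq1, hq2, hp1, hp2, hQt, hL]
        ring
      have hSval : S y y' = omg p (E x₀ y y') * ∑ w ∈ subFinset W, omg p (Qt w + L w) := by
        rw [hS]
        simp only
        rw [hre (fun x => omg p (E x y y')), Finset.mul_sum]
        apply Finset.sum_congr rfl
        intro w hw
        rw [hEexp w hw, omg_add]
      rw [hSval, norm_mul, omg_norm, one_mul, hcard]
      have := gauss_bound W Qt hqW L hLadd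
      rw [hr] at this
      exact this
  -- Step 3: counting
  have step3 : ∑ y : Vec p n, ∑ y' : Vec p n, ((A y y').card : ℝ) = (N : ℝ) * cV * cV' := by
    have hcount : ∀ y y' : Vec p n, ((A y y').card : ℝ) =
        ∑ x : Vec p n, (if x - y ∈ V then (1:ℝ) else 0) * (if x - y' ∈ V' then (1:ℝ) else 0) := by
      intro y y'
      rw [hA]
      simp only
      rw [Finset.card_filter]
      push_cast
      apply Finset.sum_congr rfl; intro x _
      by_cases h1 : x - y ∈ V <;> by_cases h2 : x - y' ∈ V' <;> simp [h1, h2]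
    have hVcount : ∀ x : Vec p n, ∑ y : Vec p n, (if x - y ∈ V then (1:ℝ) else 0) = cV := by
      intro x
      rw [← sum_subFinset_reindex V x (fun _ => (1:ℝ))]
      rw [Finset.sum_const, nsmul_eq_mul, mul_one, hcV]
    have hV'count : ∀ x : Vec p n, ∑ y' : Vec p n, (if x - y' ∈ V' then (1:ℝ) else 0) = cV' := by
      intro x
      rw [← sum_subFinset_reindex V' x (fun _ => (1:ℝ))]
      rw [Finset.sum_const, nsmul_eq_mul, mul_one, hcV']
    calc ∑ y : Vec p n, ∑ y' : Vec p n, ((A y y').card : ℝ)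
        = ∑ y : Vec p n, ∑ y' : Vec p n, ∑ x : Vec p n,
            (if x - y ∈ V then (1:ℝ) else 0) * (if x - y' ∈ V' then (1:ℝ) else 0) :=
          Finset.sum_congr rfl (fun y _ => Finset.sum_congr rfl (fun y' _ => hcount y y'))
      _ = ∑ x : Vec p n, ∑ y : Vec p n, ∑ y' : Vec p n,
            (if x - y ∈ V then (1:ℝ) else 0) * (if x - y' ∈ V' then (1:ℝ) else 0) := by
          rw [show (∑ y : Vec p n, ∑ y' : Vec p n, ∑ x : Vec p n,
              (if x - y ∈ V then (1:ℝ) else 0) * (if x - y' ∈ V' then (1:ℝ) else 0)) =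
              ∑ y : Vec p n, ∑ x : Vec p n, ∑ y' : Vec p n,
              (if x - y ∈ V then (1:ℝ) else 0) * (if x - y' ∈ V' then (1:ℝ) else 0)
            from Finset.sum_congr rfl (fun y _ => Finset.sum_comm)]
          exact Finset.sum_comm
      _ = ∑ x : Vec p n, (∑ y : Vec p n, (if x - y ∈ V then (1:ℝ) else 0)) *
            (∑ y' : Vec p n, (if x - y' ∈ V' then (1:ℝ) else 0)) := by
          apply Finset.sum_congr rfl; intro x _
          rw [Finset.sum_mul_sum]
      _ = ∑ x : Vec p n, (cV : ℝ) * cV' := by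
          apply Finset.sum_congr rfl; intro x _
          rw [hVcount x, hV'count x]
      _ = (N : ℝ) * cV * cV' := by
          rw [Finset.sum_const, nsmul_eq_mul, hN, mul_assoc, Finset.card_univ]
  -- Final assembly
  have hTbound : ‖T‖ ≤ (N : ℝ) * cV * cV' * B := by
    rw [step1b]
    calc ‖∑ y : Vec p n, ∑ y' : Vec p n, S y y'‖
        ≤ ∑ y : Vec p n, ∑ y' : Vec p n, ‖S y y'‖ := by
          refine (norm_sum_le _ _).trans (Finset.sum_le_sum fun y _ => norm_sum_le _ _)
      _ ≤ ∑ y : Vec p n, ∑ y' : Vec p n, ((A y y').card : ℝ) * B :=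
          Finset.sum_le_sum fun y _ => Finset.sum_le_sum fun y' _ => step2 y y'
      _ = (∑ y : Vec p n, ∑ y' : Vec p n, ((A y y').card : ℝ)) * B := by
          rw [Finset.sum_mul]
          exact Finset.sum_congr rfl (fun y _ => (Finset.sum_mul _ _ _).symm)
      _ = (N : ℝ) * cV * cV' * B := by rw [step3]
  have hN0 : 0 < (N : ℝ) := by
    rw [hN]; exact_mod_cast Fintype.card_pos
  have hcV0 : 0 < (cV : ℝ) := by
    have : (0:Vec p n) ∈ subFinset V := mem_subFinset.2 V.zero_mem
    exact_mod_cast Finset.card_pos.2 ⟨0, this⟩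
  have hcV'0 : 0 < (cV' : ℝ) := by
    have : (0:Vec p n) ∈ subFinset V' := mem_subFinset.2 V'.zero_mem
    exact_mod_cast Finset.card_pos.2 ⟨0, this⟩
  rw [step1a]
  rw [norm_div, norm_div]
  have h1 : ‖((cV : ℂ) * (cV' : ℂ))‖ = (cV : ℝ) * cV' := by
    rw [norm_mul]; simp
  have h2 : ‖((N : ℕ) : ℂ)‖ = (N : ℝ) := by simp
  rw [h1, h2]
  rw [div_div, div_le_iff₀ (by positivity)]
  calc ‖T‖ ≤ (N : ℝ) * cV * cV' * B := hTbound
    _ = B * ((cV : ℝ) * cV' * N) := by ring
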